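/- Let T, Ω > 0, let 𝔍(ω) = (ω³/Ω²) e^{−ω/Ω}, and let C(T, 𝔍; t) = ∫_0^∞ 𝔍(ω) [ e^{iωt}/(e^{ω/T} − 1) + e^{−iωt} (1/(e^{ω/T} − 1) + 1) ] dω. Then for every t ∈ ℝ, |C(T, 𝔍; t)| ≤ (6 T⁴/Ω²) ( 1/(T²/Ω² + t²T²)² + Σ_{n=1}^∞ 2/(n² + t²T²)² ). -/

import Mathlib

open MeasureTheory

noncomputable section

/-- The super-Ohmic (`s = 3`) spectral density with exponential cutoff,
`𝔍(ω) = ω³/Ω² · e^{−ω/Ω}`. -/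
def Jspec (Ω ω : ℝ) : ℝ := ω ^ 3 / Ω ^ 2 * Real.exp (-ω / Ω)

open Complex Set

lemma tendsto_pow_cexp (z : ℂ) (hz : 0 < z.re) (k : ℕ) :
    Filter.Tendsto (fun ω : ℝ => (ω:ℂ)^k * Complex.exp (-(z*ω))) Filter.atTop (nhds 0) := by
  rw [tendsto_zero_iff_norm_tendsto_zero]
  have h := tendsto_rpow_mul_exp_neg_mul_atTop_nhds_zero (k:ℝ) z.re hz
  refine h.congr' ?_
  filter_upwards [Filter.eventually_gt_atTop (0:ℝ)] with x hx
  rw [Real.rpow_natCast]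
  have hre : (-(z*(x:ℂ))).re = -(z.re * x) := by simp [Complex.mul_re]
  rw [norm_mul, norm_pow, Complex.norm_real, Complex.norm_exp, hre, Real.norm_eq_abs,
    abs_of_pos hx, neg_mul]

lemma cexp_integrable {z : ℂ} (hz : 0 < z.re) :
    IntegrableOn (fun ω : ℝ => (ω:ℂ)^3 * Complex.exp (-(z*ω))) (Set.Ioi 0) := by
  have hbase : IntegrableOn (fun x : ℝ => x ^ (3:ℝ) * Real.exp (-z.re * x ^ (1:ℝ)))
      (Set.Ioi 0) := integrableOn_rpow_mul_exp_neg_mul_rpow (by norm_num) zero_lt_one hz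
  have hg : IntegrableOn (fun x : ℝ => x ^ 3 * Real.exp (-(z.re * x))) (Set.Ioi 0) := by
    refine hbase.congr_fun (fun x hx => ?_) measurableSet_Ioi
    beta_reduce
    rw [Real.rpow_one, neg_mul, show (3:ℝ) = ((3:ℕ):ℝ) by norm_num, Real.rpow_natCast]
  refine hg.integrable.mono' ?_ ?_
  · exact (Continuous.aestronglyMeasurable (by continuity))
  · filter_upwards [ae_restrict_mem measurableSet_Ioi] with x hx
    have hre : (-(z*(x:ℂ))).re = -(z.re * x) := by simp [Complex.mul_re]
    rw [norm_mul, norm_pow, Complex.norm_real, Complex.norm_exp, hre, Real.norm_eq_abs,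
      abs_of_pos hx]

lemma cexp_integral {z : ℂ} (hz : 0 < z.re) :
    ∫ ω in Set.Ioi (0:ℝ), (ω:ℂ)^3 * Complex.exp (-(z*ω)) = 6 / z^4 := by
  have hz0 : z ≠ 0 := fun h => by simp [h] at hz
  have hz4 : z^4 ≠ 0 := pow_ne_zero _ hz0
  set F : ℝ → ℂ := fun ω =>
    -Complex.exp (-(z*ω)) * (z^3*(ω:ℂ)^3 + 3*z^2*(ω:ℂ)^2 + 6*z*(ω:ℂ) + 6) / z^4 with hF
  have hderiv : ∀ x : ℝ, HasDerivAt F ((x:ℂ)^3 * Complex.exp (-(z*x))) x := by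
    intro x
    have hid : HasDerivAt (fun ω : ℝ => (ω:ℂ)) 1 x := by
      simpa using (hasDerivAt_id x).ofReal_comp
    have hexp : HasDerivAt (fun ω : ℝ => Complex.exp (-(z*ω)))
        (-z * Complex.exp (-(z*x))) x := by
      have h1 : HasDerivAt (fun ω : ℝ => -(z*(ω:ℂ))) (-z) x := by
        exact (hid.const_mul z).neg.congr_deriv (by simp)
      simpa [mul_comm] using h1.cexp
    have h2 : HasDerivAt (fun ω : ℝ => (ω:ℂ)^2) (2*(x:ℂ)) x := by
      have := hid.mul hid
      have he : ((fun ω : ℝ => (ω:ℂ)) * (fun ω : ℝ => (ω:ℂ))) = fun ω : ℝ => (ω:ℂ)^2 := by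
        funext ω; simp only [Pi.mul_apply]; ring
      rw [he] at this
      exact this.congr_deriv (by ring)
    have h3 : HasDerivAt (fun ω : ℝ => (ω:ℂ)^3) (3*(x:ℂ)^2) x := by
      have := h2.mul hid
      have he : ((fun ω : ℝ => (ω:ℂ)^2) * (fun ω : ℝ => (ω:ℂ))) = fun ω : ℝ => (ω:ℂ)^3 := by
        funext ω; simp only [Pi.mul_apply]; ring
      rw [he] at this
      exact this.congr_deriv (by ring)
    have hP : HasDerivAt (fun ω : ℝ => z^3*(ω:ℂ)^3 + 3*z^2*(ω:ℂ)^2 + 6*z*(ω:ℂ) + 6)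
        (z^3*(3*(x:ℂ)^2) + 3*z^2*(2*(x:ℂ)) + 6*z*1) x := by
      exact (((h3.const_mul (z^3)).add (h2.const_mul (3*z^2))).add
        (hid.const_mul (6*z))).add_const 6
    have hFd := (hexp.neg.mul hP).div_const (z^4)
    refine hFd.congr_deriv ?_
    simp only [Pi.neg_apply]
    rw [div_eq_iff hz4]
    ring
  have hlim : Filter.Tendsto F Filter.atTop (nhds 0) := by
    have h0 := tendsto_pow_cexp z hz 0
    have h1 := tendsto_pow_cexp z hz 1
    have h2 := tendsto_pow_cexp z hz 2
    have h3 := tendsto_pow_cexp z hz 3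
    have key := ((((((h3.const_mul (z^3)).add (h2.const_mul (3*z^2))).add
      (h1.const_mul (6*z))).add (h0.const_mul 6)).neg).div_const (z^4))
    simp only [mul_zero, add_zero, neg_zero, zero_div] at key
    refine key.congr (fun ω => ?_)
    simp only [hF, pow_one, pow_zero, mul_one]
    ring
  have := integral_Ioi_of_hasDerivAt_of_tendsto' (f := F)
    (f' := fun ω : ℝ => (ω:ℂ)^3 * Complex.exp (-(z*ω)))
    (fun x _ => hderiv x) (cexp_integrable hz) hlim
  rw [this]
  simp only [hF, Complex.ofReal_zero, mul_zero, neg_zero, Complex.exp_zero]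
  field_simp
  ring

lemma rexp_integral {a : ℝ} (ha : 0 < a) :
    ∫ ω in Set.Ioi (0:ℝ), ω^3 * Real.exp (-(a*ω)) = 6/a^4 := by
  have h := Real.integral_rpow_mul_exp_neg_mul_Ioi (a := (4:ℝ)) (r := a) (by norm_num) ha
  have hG : Real.Gamma 4 = 6 := by
    rw [show (4:ℝ) = ((3:ℕ):ℝ) + 1 by norm_num, Real.Gamma_nat_eq_factorial]
    norm_num [Nat.factorial]
  rw [hG] at h
  have heq : ∫ ω in Set.Ioi (0:ℝ), ω^3 * Real.exp (-(a*ω))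
      = ∫ t in Set.Ioi (0:ℝ), t ^ ((4:ℝ) - 1) * Real.exp (-(a*t)) := by
    refine setIntegral_congr_fun measurableSet_Ioi (fun x _ => ?_)
    norm_num
  rw [heq, h, show ((4:ℝ)) = ((4:ℕ):ℝ) by norm_num, Real.rpow_natCast]
  rw [div_pow, one_pow]
  ring

lemma expand_exp (a c ω : ℝ) :
    Complex.exp (Complex.I * ω * c) * ((Real.exp (-(a*ω)) : ℝ) : ℂ)
      = Complex.exp (-(((a:ℂ) - Complex.I*c) * ω)) := by
  rw [Complex.ofReal_exp, ← Complex.exp_add]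
  congr 1
  push_cast
  ring

lemma hre_block (a c : ℝ) (ha : 0 < a) : 0 < ((a:ℂ) - Complex.I*c).re := by
  simp [ha]

lemma block_integrable (a c : ℝ) (ha : 0 < a) :
    IntegrableOn (fun ω : ℝ => (ω:ℂ)^3 *
      (Complex.exp (Complex.I*ω*c) * ((Real.exp (-(a*ω)) : ℝ) : ℂ))) (Set.Ioi 0) := by
  simpa only [expand_exp] using cexp_integrable (hre_block a c ha)

lemma block_abs (a c : ℝ) (ha : 0 < a) :
    ‖∫ ω in Set.Ioi (0:ℝ), (ω:ℂ)^3 *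
        (Complex.exp (Complex.I*ω*c) * ((Real.exp (-(a*ω)) : ℝ) : ℂ))‖
      = 6 / (a^2+c^2)^2 := by
  simp only [expand_exp]
  rw [cexp_integral (hre_block a c ha), norm_div, norm_pow]
  have h4 : ‖(a:ℂ) - Complex.I*c‖ ^ 4 = (a^2+c^2)^2 := by
    rw [show (4:ℕ) = 2*2 from rfl, pow_mul, Complex.sq_norm]
    have : Complex.normSq ((a:ℂ) - Complex.I*c) = a^2 + c^2 := by
      simp [Complex.normSq_apply]
      ring
    rw [this]
  rw [h4]
  norm_num

lemma block_norm (a c : ℝ) (ha : 0 < a) {ω : ℝ} (hω : 0 < ω) :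
    ‖(ω:ℂ)^3 * (Complex.exp (Complex.I*ω*c) * ((Real.exp (-(a*ω)) : ℝ) : ℂ))‖
      = ω^3 * Real.exp (-(a*ω)) := by
  have h1 : (Complex.I*(ω:ℂ)*(c:ℂ)).re = 0 := by simp
  rw [norm_mul, norm_pow, norm_mul, Complex.norm_exp, h1, Real.exp_zero, one_mul,
    Complex.norm_real, Complex.norm_real, Real.norm_eq_abs, Real.norm_eq_abs,
    abs_of_pos hω, abs_of_pos (Real.exp_pos _)]

lemma S4 : Summable (fun n : ℕ => 1/((n:ℝ)+1)^4) := by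
  have h := (Real.summable_one_div_nat_pow (p := 4)).mpr (by norm_num)
  have h2 := (summable_nat_add_iff (f := fun n : ℕ => 1/(n:ℝ)^4) 1).mpr h
  refine h2.congr (fun n => ?_)
  push_cast
  ring

lemma geom_hasSum {x : ℝ} (hx : 0 < x) :
    HasSum (fun n : ℕ => Real.exp (-(((n:ℝ)+1)*x))) ((Real.exp x - 1)⁻¹) := by
  set r := Real.exp (-x) with hr
  have hr0 : 0 ≤ r := (Real.exp_pos _).le
  have hr1 : r < 1 := Real.exp_lt_one_iff.mpr (by linarith)
  have h0 := hasSum_geometric_of_lt_one hr0 hr1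
  have h1 := h0.mul_left r
  have hE1 : 1 < Real.exp x := Real.one_lt_exp_iff.mpr hx
  have hE0 : Real.exp x ≠ 0 := (Real.exp_pos _).ne'
  have hEs : Real.exp x - 1 ≠ 0 := sub_ne_zero_of_ne hE1.ne'
  have hfun : (fun n : ℕ => r * r^n) = fun n : ℕ => Real.exp (-(((n:ℝ)+1)*x)) := by
    funext n
    rw [hr, ← Real.exp_nat_mul, ← Real.exp_add]
    congr 1
    ring
  have hval : r * (1-r)⁻¹ = (Real.exp x - 1)⁻¹ := by
    have hstep : 1 - (Real.exp x)⁻¹ = (Real.exp x - 1) / Real.exp x := by field_simp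
    rw [hr, Real.exp_neg, hstep, inv_div]
    field_simp
  rw [hfun, hval] at h1
  exact h1

lemma Dsummable (t T : ℝ) : Summable (fun n : ℕ => 1/(((n:ℝ)+1)^2 + t^2*T^2)^2) := by
  refine Summable.of_nonneg_of_le (fun n => by positivity) (fun n => ?_) S4
  have h1 : ((n:ℝ)+1)^4 ≤ (((n:ℝ)+1)^2 + t^2*T^2)^2 := by
    nlinarith [sq_nonneg (t*T), sq_nonneg ((n:ℝ)+1)]
  exact one_div_le_one_div_of_le (by positivity) h1

lemma series_bound (T Ω t c : ℝ) (hT : 0 < T) (hΩ : 0 < Ω) (hc : c^2 = t^2) :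
    ‖∫ ω in Set.Ioi (0:ℝ), (Jspec Ω ω : ℂ) *
        (Complex.exp (Complex.I*(ω:ℂ)*(c:ℂ)) / (Complex.exp ((ω:ℂ)/(T:ℂ)) - 1))‖
      ≤ ∑' k : ℕ, 6*T^4/Ω^2 * (1/(((k:ℝ)+1)^2 + t^2*T^2)^2) := by
  set A : ℕ → ℝ := fun n => 1/Ω + ((n:ℝ)+1)/T with hA
  have hApos : ∀ n, 0 < A n := fun n => by
    have : (0:ℝ) < ((n:ℝ)+1) := by positivity
    rw [hA]; positivity
  set F : ℕ → ℝ → ℂ := fun n ω => ((Ω:ℂ)^2)⁻¹ *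
    ((ω:ℂ)^3 * (Complex.exp (Complex.I*(ω:ℂ)*(c:ℂ)) * ((Real.exp (-((A n)*ω)) : ℝ) : ℂ)))
    with hF
  have hFint : ∀ n, IntegrableOn (F n) (Set.Ioi 0) := fun n =>
    ((block_integrable (A n) c (hApos n)).const_mul _)
  have hTA : ∀ n : ℕ, ((n:ℝ)+1) ≤ T * A n := by
    intro n
    have he : T * A n = T/Ω + ((n:ℝ)+1) := by rw [hA]; field_simp
    have : 0 < T/Ω := by positivity
    rw [he]
    linarith
  -- value of the norm integrals
  have hnormval : ∀ n, ∫ ω in Set.Ioi (0:ℝ), ‖F n ω‖ = (Ω^2)⁻¹ * (6/(A n)^4) := by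
    intro n
    have hpt : ∀ ω ∈ Set.Ioi (0:ℝ),
        ‖F n ω‖ = (Ω^2)⁻¹ * (ω^3 * Real.exp (-((A n)*ω))) := by
      intro ω hω
      rw [hF]
      simp only []
      rw [norm_mul, block_norm (A n) c (hApos n) hω]
      congr 1
      rw [norm_inv, norm_pow, Complex.norm_real, Real.norm_eq_abs, abs_of_pos hΩ]
    rw [setIntegral_congr_fun measurableSet_Ioi hpt, integral_const_mul,
      rexp_integral (hApos n)]
  -- summability of the norm integrals
  have hkey : ∀ n : ℕ, (Ω^2)⁻¹ * (6/(A n)^4) ≤ ((Ω^2)⁻¹ * (6*T^4)) * (1/((n:ℝ)+1)^4) := by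
    intro n
    have h4 : ((n:ℝ)+1)^4 ≤ T^4 * (A n)^4 := by
      have := pow_le_pow_left₀ (by positivity : (0:ℝ) ≤ (n:ℝ)+1) (hTA n) 4
      rw [mul_pow] at this
      exact this
    have hΩ0 : Ω ≠ 0 := hΩ.ne'
    have hAn0 : A n ≠ 0 := (hApos n).ne'
    rw [show (Ω^2)⁻¹ * (6/(A n)^4) = 6 / (Ω^2*(A n)^4) by field_simp,
      show ((Ω^2)⁻¹ * (6*T^4)) * (1/((n:ℝ)+1)^4) = (6*T^4) / (Ω^2*((n:ℝ)+1)^4) by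
        field_simp,
      div_le_div_iff₀ (by positivity) (by positivity)]
    nlinarith [mul_le_mul_of_nonneg_left h4 (show (0:ℝ) ≤ 6*Ω^2 by positivity)]
  have hsum_norm : Summable (fun n => ∫ ω in Set.Ioi (0:ℝ), ‖F n ω‖) := by
    refine Summable.of_nonneg_of_le
      (fun n => integral_nonneg (fun ω => norm_nonneg _)) (fun n => ?_)
      (S4.mul_left ((Ω^2)⁻¹ * (6*T^4)))
    rw [hnormval n]
    exact hkey n
  -- pointwise expansion into the series
  have hpt : ∀ ω ∈ Set.Ioi (0:ℝ), (Jspec Ω ω : ℂ) *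
      (Complex.exp (Complex.I*(ω:ℂ)*(c:ℂ)) / (Complex.exp ((ω:ℂ)/(T:ℂ)) - 1))
        = ∑' n, F n ω := by
    intro ω hω
    have hω0 : 0 < ω := hω
    have hωT : 0 < ω/T := by positivity
    have hgeo := geom_hasSum hωT
    have hgeoC := Complex.ofRealCLM.hasSum hgeo
    simp only [Complex.ofRealCLM_apply] at hgeoC
    have h2 := hgeoC.mul_left ((Jspec Ω ω : ℂ) * Complex.exp (Complex.I*(ω:ℂ)*(c:ℂ)))
    have hfun : (fun n : ℕ => ((Jspec Ω ω : ℂ) * Complex.exp (Complex.I*(ω:ℂ)*(c:ℂ))) *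
        ((Real.exp (-(((n:ℝ)+1)*(ω/T))) : ℝ) : ℂ)) = fun n => F n ω := by
      funext n
      have hexp : Real.exp (-ω/Ω) * Real.exp (-(((n:ℝ)+1)*(ω/T)))
          = Real.exp (-(A n * ω)) := by
        rw [← Real.exp_add]
        congr 1
        rw [hA]
        field_simp
        ring
      rw [hF]
      simp only []
      rw [show ((Real.exp (-(A n*ω)) : ℝ) : ℂ)
          = ((Real.exp (-ω/Ω) : ℝ) : ℂ) * ((Real.exp (-(((n:ℝ)+1)*(ω/T))) : ℝ) : ℂ) by
        rw [← Complex.ofReal_mul, hexp]]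
      rw [Jspec]
      push_cast
      ring
    rw [hfun] at h2
    have hval : ((Jspec Ω ω : ℂ) * Complex.exp (Complex.I*(ω:ℂ)*(c:ℂ))) *
        (((Real.exp (ω/T) - 1)⁻¹ : ℝ) : ℂ)
          = (Jspec Ω ω : ℂ) *
            (Complex.exp (Complex.I*(ω:ℂ)*(c:ℂ)) / (Complex.exp ((ω:ℂ)/(T:ℂ)) - 1)) := by
      have hcexp : Complex.exp ((ω:ℂ)/(T:ℂ)) = ((Real.exp (ω/T) : ℝ) : ℂ) := by
        rw [Complex.ofReal_exp]
        congr 1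
        push_cast
        ring
      rw [hcexp]
      push_cast
      ring
    rw [hval] at h2
    exact h2.tsum_eq.symm
  rw [setIntegral_congr_fun measurableSet_Ioi hpt,
    ← integral_tsum_of_summable_integral_norm hFint hsum_norm]
  -- bound the sum of the integrals
  have habs : ∀ n, ‖∫ ω in Set.Ioi (0:ℝ), F n ω‖
      = (Ω^2)⁻¹ * (6/((A n)^2 + c^2)^2) := by
    intro n
    rw [hF]
    simp only []
    rw [integral_const_mul, norm_mul, block_abs (A n) c (hApos n), norm_inv, norm_pow,
      Complex.norm_real, Real.norm_eq_abs, abs_of_pos hΩ]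
  have hbound : ∀ n : ℕ, ‖∫ ω in Set.Ioi (0:ℝ), F n ω‖
      ≤ 6*T^4/Ω^2 * (1/(((n:ℝ)+1)^2 + t^2*T^2)^2) := by
    intro n
    rw [habs n, hc]
    have h1 : ((n:ℝ)+1)^2 ≤ T^2 * (A n)^2 := by
      have := pow_le_pow_left₀ (by positivity : (0:ℝ) ≤ (n:ℝ)+1) (hTA n) 2
      rw [mul_pow] at this
      exact this
    have h2 : ((n:ℝ)+1)^2 + t^2*T^2 ≤ T^2*((A n)^2 + t^2) := by nlinarith
    have h3 : (((n:ℝ)+1)^2 + t^2*T^2)^2 ≤ T^4*((A n)^2 + t^2)^2 := by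
      have := pow_le_pow_left₀ (by positivity : (0:ℝ) ≤ ((n:ℝ)+1)^2 + t^2*T^2) h2 2
      rw [mul_pow] at this
      calc (((n:ℝ)+1)^2 + t^2*T^2)^2 ≤ (T^2)^2*((A n)^2 + t^2)^2 := this
        _ = T^4*((A n)^2 + t^2)^2 := by ring
    have hΩ0 : Ω ≠ 0 := hΩ.ne'
    have hAt0 : (A n)^2 + t^2 ≠ 0 := by positivity
    have hD0 : ((n:ℝ)+1)^2 + t^2*T^2 ≠ 0 := by positivity
    rw [show (Ω^2)⁻¹ * (6/((A n)^2 + t^2)^2) = 6/(Ω^2*((A n)^2+t^2)^2) by field_simp,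
      show 6*T^4/Ω^2 * (1/(((n:ℝ)+1)^2 + t^2*T^2)^2)
        = (6*T^4)/(Ω^2*((((n:ℝ)+1)^2 + t^2*T^2)^2)) by field_simp,
      div_le_div_iff₀ (by positivity) (by positivity)]
    nlinarith [mul_le_mul_of_nonneg_left h3 (show (0:ℝ) ≤ 6*Ω^2 by positivity)]
  have hnrm : Summable (fun n => ‖∫ ω in Set.Ioi (0:ℝ), F n ω‖) := by
    refine Summable.of_nonneg_of_le (fun n => norm_nonneg _) (fun n => ?_) hsum_norm
    exact norm_integral_le_integral_norm _
  refine le_trans (norm_tsum_le_tsum_norm hnrm) (Summable.tsum_le_tsum hbound hnrm ?_)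
  exact ((Dsummable t T).mul_left _)


/-- The bath correlation function
`C(T,𝔍;t) = ∫_0^∞ 𝔍(ω)[e^{iωt}/(e^{ω/T}−1) + e^{−iωt}(1/(e^{ω/T}−1)+1)] dω`. -/
def bathCorr (T Ω t : ℝ) : ℂ :=
  ∫ ω in Set.Ioi (0 : ℝ), (Jspec Ω ω : ℂ) *
    (Complex.exp (Complex.I * (ω : ℂ) * (t : ℂ)) / (Complex.exp ((ω : ℂ) / (T : ℂ)) - 1) +
      Complex.exp (-(Complex.I * (ω : ℂ) * (t : ℂ))) *
        (1 / (Complex.exp ((ω : ℂ) / (T : ℂ)) - 1) + 1))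

lemma J_block (Ω c : ℝ) (hΩ : 0 < Ω) (ω : ℝ) :
    (Jspec Ω ω : ℂ) * Complex.exp (Complex.I*(ω:ℂ)*(c:ℂ))
      = ((Ω:ℂ)^2)⁻¹ * ((ω:ℂ)^3 *
        (Complex.exp (Complex.I*(ω:ℂ)*(c:ℂ)) * ((Real.exp (-((1/Ω)*ω)) : ℝ) : ℂ))) := by
  rw [Jspec, show -ω/Ω = -((1/Ω)*ω) by ring]
  push_cast
  ring

lemma f3_integrable (Ω c : ℝ) (hΩ : 0 < Ω) :
    IntegrableOn (fun ω : ℝ => (Jspec Ω ω : ℂ) * Complex.exp (Complex.I*(ω:ℂ)*(c:ℂ)))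
      (Set.Ioi 0) := by
  have h := (block_integrable (1/Ω) c (by positivity)).const_mul (((Ω:ℂ)^2)⁻¹)
  have hfun : (fun ω : ℝ => ((Ω:ℂ)^2)⁻¹ * ((ω:ℂ)^3 *
      (Complex.exp (Complex.I*(ω:ℂ)*(c:ℂ)) * ((Real.exp (-((1/Ω)*ω)) : ℝ) : ℂ))))
        = fun ω : ℝ => (Jspec Ω ω : ℂ) * Complex.exp (Complex.I*(ω:ℂ)*(c:ℂ)) :=
    funext fun ω => (J_block Ω c hΩ ω).symm
  rw [← hfun]
  exact h

lemma f3_abs (Ω c : ℝ) (hΩ : 0 < Ω) :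
    ‖∫ ω in Set.Ioi (0:ℝ),
        (Jspec Ω ω : ℂ) * Complex.exp (Complex.I*(ω:ℂ)*(c:ℂ))‖
      = (Ω^2)⁻¹ * (6/((1/Ω)^2 + c^2)^2) := by
  have hfun : (fun ω : ℝ => (Jspec Ω ω : ℂ) * Complex.exp (Complex.I*(ω:ℂ)*(c:ℂ)))
      = fun ω : ℝ => ((Ω:ℂ)^2)⁻¹ * ((ω:ℂ)^3 *
        (Complex.exp (Complex.I*(ω:ℂ)*(c:ℂ)) * ((Real.exp (-((1/Ω)*ω)) : ℝ) : ℂ))) :=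
    funext fun ω => J_block Ω c hΩ ω
  rw [hfun, integral_const_mul, norm_mul, block_abs (1/Ω) c (by positivity), norm_inv,
    norm_pow, Complex.norm_real, Real.norm_eq_abs, abs_of_pos hΩ]

lemma piece_integrable (T Ω c : ℝ) (hT : 0 < T) (hΩ : 0 < Ω) :
    IntegrableOn (fun ω : ℝ => (Jspec Ω ω : ℂ) *
        (Complex.exp (Complex.I*(ω:ℂ)*(c:ℂ)) / (Complex.exp ((ω:ℂ)/(T:ℂ)) - 1)))
      (Set.Ioi 0) := by
  have hbase : IntegrableOn (fun x : ℝ => x ^ (2:ℝ) * Real.exp (-(1/Ω) * x ^ (1:ℝ)))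
      (Set.Ioi 0) := integrableOn_rpow_mul_exp_neg_mul_rpow (by norm_num) zero_lt_one (by positivity)
  have hb2 : IntegrableOn (fun x : ℝ => x^2 * Real.exp (-((1/Ω)*x))) (Set.Ioi 0) := by
    refine hbase.congr_fun (fun x hx => ?_) measurableSet_Ioi
    beta_reduce
    rw [Real.rpow_one, neg_mul, show (2:ℝ) = ((2:ℕ):ℝ) by norm_num, Real.rpow_natCast]
  have hg : IntegrableOn (fun x : ℝ => (T/Ω^2) * (x^2 * Real.exp (-((1/Ω)*x))))
      (Set.Ioi 0) := hb2.const_mul _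
  refine hg.integrable.mono' ?_ ?_
  · refine ContinuousOn.aestronglyMeasurable ?_ measurableSet_Ioi
    have hJcont : Continuous (fun ω : ℝ => Jspec Ω ω) := by
      unfold Jspec
      continuity
    refine ContinuousOn.mul (Continuous.continuousOn
      (Complex.continuous_ofReal.comp hJcont)) ?_
    refine ContinuousOn.div (Continuous.continuousOn (by continuity))
      (Continuous.continuousOn (by continuity)) ?_
    intro x hx
    have hx0 : (0:ℝ) < x := hx
    have hcexp : Complex.exp ((x:ℂ)/(T:ℂ)) = ((Real.exp (x/T) : ℝ) : ℂ) := by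
      rw [Complex.ofReal_exp]; congr 1; push_cast; ring
    rw [hcexp, show ((Real.exp (x/T) : ℝ) : ℂ) - 1 = ((Real.exp (x/T) - 1 : ℝ) : ℂ) by
      push_cast; ring]
    have hE1 : 1 < Real.exp (x/T) := Real.one_lt_exp_iff.mpr (by positivity)
    exact_mod_cast Complex.ofReal_ne_zero.mpr (sub_ne_zero_of_ne hE1.ne')
  · filter_upwards [ae_restrict_mem measurableSet_Ioi] with ω hω
    have hω0 : (0:ℝ) < ω := hω
    set E := Real.exp (ω/T) with hE
    have hE1 : 1 < E := Real.one_lt_exp_iff.mpr (by positivity)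
    have hcexp : Complex.exp ((ω:ℂ)/(T:ℂ)) = ((E : ℝ) : ℂ) := by
      rw [hE, Complex.ofReal_exp]; congr 1; push_cast; ring
    have hJ : 0 ≤ Jspec Ω ω := by rw [Jspec]; positivity
    have hEω : ω/T + 1 ≤ E := by
      rw [hE]
      linarith [Real.add_one_le_exp (ω/T)]
    have hnorm : ‖(Jspec Ω ω : ℂ) *
        (Complex.exp (Complex.I*(ω:ℂ)*(c:ℂ)) / (Complex.exp ((ω:ℂ)/(T:ℂ)) - 1))‖
          = Jspec Ω ω * (1/(E - 1)) := by
      rw [hcexp, show ((E : ℝ) : ℂ) - 1 = ((E - 1 : ℝ) : ℂ) by push_cast; ring]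
      rw [norm_mul, norm_div, Complex.norm_real, Complex.norm_real, Complex.norm_exp,
        Real.norm_eq_abs, Real.norm_eq_abs]
      have h1 : (Complex.I*(ω:ℂ)*(c:ℂ)).re = 0 := by simp
      rw [h1, Real.exp_zero, _root_.abs_of_nonneg hJ,
        _root_.abs_of_pos (by linarith : (0:ℝ) < E - 1)]
    rw [hnorm]
    have hle : 1/(E - 1) ≤ T/ω := by
      have h2 : ω/T ≤ E - 1 := by linarith
      have h3 : 1/(E-1) ≤ 1/(ω/T) := one_div_le_one_div_of_le (by positivity) h2
      rwa [one_div_div] at h3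
    have heq : Jspec Ω ω * (T/ω) = (T/Ω^2) * (ω^2 * Real.exp (-((1/Ω)*ω))) := by
      rw [Jspec, show -ω/Ω = -((1/Ω)*ω) by ring]
      field_simp
    calc Jspec Ω ω * (1/(E - 1)) ≤ Jspec Ω ω * (T/ω) :=
          mul_le_mul_of_nonneg_left hle hJ
      _ = (T/Ω^2) * (ω^2 * Real.exp (-((1/Ω)*ω))) := heq


/-- Pointwise bound on the bath correlation function:
`|C(T,𝔍;t)| ≤ (6T⁴/Ω²)(1/(T²/Ω² + t²T²)² + Σ_{n=1}^∞ 2/(n² + t²T²)²)`. -/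
theorem abs_bathCorr_le (T Ω t : ℝ) (hT : 0 < T) (hΩ : 0 < Ω) :
    ‖bathCorr T Ω t‖ ≤ 6 * T ^ 4 / Ω ^ 2 *
      (1 / (T ^ 2 / Ω ^ 2 + t ^ 2 * T ^ 2) ^ 2 +
        ∑' k : ℕ, 2 / (((k : ℝ) + 1) ^ 2 + t ^ 2 * T ^ 2) ^ 2) := by
  have hf1 := piece_integrable T Ω t hT hΩ
  have hf2 := piece_integrable T Ω (-t) hT hΩ
  have hf3 := f3_integrable Ω (-t) hΩ
  have hsplit : ∀ ω : ℝ, (Jspec Ω ω : ℂ) *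
      (Complex.exp (Complex.I * (ω : ℂ) * (t : ℂ)) / (Complex.exp ((ω : ℂ) / (T : ℂ)) - 1) +
        Complex.exp (-(Complex.I * (ω : ℂ) * (t : ℂ))) *
          (1 / (Complex.exp ((ω : ℂ) / (T : ℂ)) - 1) + 1))
      = (Jspec Ω ω : ℂ) *
          (Complex.exp (Complex.I*(ω:ℂ)*(t:ℂ)) / (Complex.exp ((ω:ℂ)/(T:ℂ)) - 1))
        + (Jspec Ω ω : ℂ) *
          (Complex.exp (Complex.I*(ω:ℂ)*((-t:ℝ):ℂ)) / (Complex.exp ((ω:ℂ)/(T:ℂ)) - 1))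
        + (Jspec Ω ω : ℂ) * Complex.exp (Complex.I*(ω:ℂ)*((-t:ℝ):ℂ)) := by
    intro ω
    have harg : Complex.exp (Complex.I*(ω:ℂ)*((-t:ℝ):ℂ))
        = Complex.exp (-(Complex.I*(ω:ℂ)*(t:ℂ))) := by
      congr 1
      push_cast
      ring
    rw [harg]
    ring
  have hdecomp : bathCorr T Ω t
      = (∫ ω in Set.Ioi (0:ℝ), (Jspec Ω ω : ℂ) *
          (Complex.exp (Complex.I*(ω:ℂ)*(t:ℂ)) / (Complex.exp ((ω:ℂ)/(T:ℂ)) - 1)))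
        + (∫ ω in Set.Ioi (0:ℝ), (Jspec Ω ω : ℂ) *
          (Complex.exp (Complex.I*(ω:ℂ)*((-t:ℝ):ℂ)) / (Complex.exp ((ω:ℂ)/(T:ℂ)) - 1)))
        + (∫ ω in Set.Ioi (0:ℝ), (Jspec Ω ω : ℂ) *
            Complex.exp (Complex.I*(ω:ℂ)*((-t:ℝ):ℂ))) := by
    rw [bathCorr]
    rw [setIntegral_congr_fun measurableSet_Ioi (fun ω _ => hsplit ω)]
    have hf12 : IntegrableOn (fun ω : ℝ =>
        (Jspec Ω ω : ℂ) * (Complex.exp (Complex.I*(ω:ℂ)*(t:ℂ)) /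
          (Complex.exp ((ω:ℂ)/(T:ℂ)) - 1))
        + (Jspec Ω ω : ℂ) * (Complex.exp (Complex.I*(ω:ℂ)*((-t:ℝ):ℂ)) /
          (Complex.exp ((ω:ℂ)/(T:ℂ)) - 1))) (Set.Ioi 0) := hf1.add hf2
    rw [integral_add hf12 hf3, integral_add hf1 hf2]
  have hb1 := series_bound T Ω t t hT hΩ rfl
  have hb2 := series_bound T Ω t (-t) hT hΩ (by ring)
  have hb3 : ‖∫ ω in Set.Ioi (0:ℝ), (Jspec Ω ω : ℂ) *
      Complex.exp (Complex.I*(ω:ℂ)*((-t:ℝ):ℂ))‖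
        = 6*T^4/Ω^2 * (1 / (T ^ 2 / Ω ^ 2 + t ^ 2 * T ^ 2) ^ 2) := by
    rw [f3_abs Ω (-t) hΩ]
    have hΩ0 : Ω ≠ 0 := hΩ.ne'
    have hT0 : T ≠ 0 := hT.ne'
    field_simp
  have hS : Summable (fun k : ℕ => 6*T^4/Ω^2 * (1/(((k:ℝ)+1)^2 + t^2*T^2)^2)) :=
    (Dsummable t T).mul_left _
  have habs3 : ‖bathCorr T Ω t‖
      ≤ (∑' k : ℕ, 6*T^4/Ω^2 * (1/(((k:ℝ)+1)^2 + t^2*T^2)^2))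
        + (∑' k : ℕ, 6*T^4/Ω^2 * (1/(((k:ℝ)+1)^2 + t^2*T^2)^2))
        + 6*T^4/Ω^2 * (1 / (T ^ 2 / Ω ^ 2 + t ^ 2 * T ^ 2) ^ 2) := by
    rw [hdecomp]
    refine le_trans (norm_add₃_le) ?_
    rw [hb3]
    exact add_le_add (add_le_add hb1 hb2) le_rfl
  have hrhs : 6 * T ^ 4 / Ω ^ 2 *
      (1 / (T ^ 2 / Ω ^ 2 + t ^ 2 * T ^ 2) ^ 2 +
        ∑' k : ℕ, 2 / (((k : ℝ) + 1) ^ 2 + t ^ 2 * T ^ 2) ^ 2)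
      = (∑' k : ℕ, 6*T^4/Ω^2 * (1/(((k:ℝ)+1)^2 + t^2*T^2)^2))
        + (∑' k : ℕ, 6*T^4/Ω^2 * (1/(((k:ℝ)+1)^2 + t^2*T^2)^2))
        + 6*T^4/Ω^2 * (1 / (T ^ 2 / Ω ^ 2 + t ^ 2 * T ^ 2) ^ 2) := by
    have h1 : (∑' k : ℕ, 2 / (((k : ℝ) + 1) ^ 2 + t ^ 2 * T ^ 2) ^ 2)
        = (∑' k : ℕ, 1/(((k:ℝ)+1)^2 + t^2*T^2)^2)
          + (∑' k : ℕ, 1/(((k:ℝ)+1)^2 + t^2*T^2)^2) := by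
      rw [← Summable.tsum_add (Dsummable t T) (Dsummable t T)]
      congr 1
      funext k
      ring
    have h2 : (∑' k : ℕ, 6*T^4/Ω^2 * (1/(((k:ℝ)+1)^2 + t^2*T^2)^2))
        = 6*T^4/Ω^2 * ∑' k : ℕ, 1/(((k:ℝ)+1)^2 + t^2*T^2)^2 := tsum_mul_left
    rw [h1, h2]
    ring
  rw [hrhs]
  exact habs3
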